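/- arXiv:2412.10234 — 3 statements merged into one kernel-verified Lean document; each statement's English description precedes it below -/
import Mathlib

section
/- Let G be a group acting on the right on commutative ℂ-algebras of functions, and let V be a G-module of functions on which G acts by operators |_{a}γ for weights a, satisfying |_{a}(γ₁γ₂) = (|_{a}γ₁)|_{a}γ₂ and multiplicativity (fg)|_{a+b}γ = (f|_aγ)(g|_bγ). Suppose I, I₁ are functions, r, r₁, r₂ : G → V are maps such that: (i) r₁ and r₂ are 1-cocycles, i.e., r_j(γ₁γ₂) = r_j(γ₁)|γ₂ + r_j(γ₂); (ii) I₁|(1−γ) = r₁(γ) for all γ; (iii) I|(γ−1) = −r(γ) + r₁(γ)r₂(γ) − r₂(γ)·I₁ for all γ. Then for all γ₁, γ₂ ∈ G: r(γ₁γ₂) − r(γ₁)|γ₂ − r(γ₂) = (r₁(γ₁)|γ₂)·r₂(γ₂). -/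
/-- Abstract depth-2 cocycle relation (algebraic content of Corollary 6.5).
`G` acts on the right on a commutative `ℂ`-algebra `A` of functions by weight actions
`act a`, compatible with products in the weight-additive sense. Given the depth-1
cocycle relations for `r₁, r₂`, the Eichler relation `I₁|(1−γ) = r₁(γ)` and the
depth-2 relation `I|(γ−1) = −r(γ) + r₁(γ)r₂(γ) − r₂(γ)·I₁`, it follows that
`r(γ₁γ₂) − r(γ₁)|γ₂ − r(γ₂) = (r₁(γ₁)|γ₂)·r₂(γ₂)`. -/
theorem stmt3 {G A : Type*} [Group G] [CommRing A] [Algebra ℂ A]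
    (act : ℝ → A → G → A)
    (h_add : ∀ (a : ℝ) (x y : A) (γ : G), act a (x + y) γ = act a x γ + act a y γ)
    (h_comp : ∀ (a : ℝ) (x : A) (γ₁ γ₂ : G),
      act a (act a x γ₁) γ₂ = act a x (γ₁ * γ₂))
    (h_one : ∀ (a : ℝ) (x : A), act a x 1 = x)
    (h_mul : ∀ (a b : ℝ) (x y : A) (γ : G),
      act (a + b) (x * y) γ = act a x γ * act b y γ)
    (k₁ k₂ : ℝ) (I I₁ : A) (r r₁ r₂ : G → A)
    (hr₁ : ∀ γ₁ γ₂ : G, r₁ (γ₁ * γ₂) = act (2 - k₁) (r₁ γ₁) γ₂ + r₁ γ₂)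
    (hr₂ : ∀ γ₁ γ₂ : G, r₂ (γ₁ * γ₂) = act (2 - k₂) (r₂ γ₁) γ₂ + r₂ γ₂)
    (hI₁ : ∀ γ : G, I₁ - act (2 - k₁) I₁ γ = r₁ γ)
    (hI : ∀ γ : G,
      act ((2 - k₁) + (2 - k₂)) I γ - I = -(r γ) + r₁ γ * r₂ γ - r₂ γ * I₁)
    (γ₁ γ₂ : G) :
    r (γ₁ * γ₂) - act ((2 - k₁) + (2 - k₂)) (r γ₁) γ₂ - r γ₂
      = act (2 - k₁) (r₁ γ₁) γ₂ * r₂ γ₂ := by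
  -- act is additive, hence preserves 0, neg, sub
  have hzero : ∀ (a : ℝ) (γ : G), act a 0 γ = 0 := by
    intro a γ
    have h := h_add a 0 0 γ
    rw [add_zero] at h
    exact left_eq_add.mp h
  have hsub : ∀ (a : ℝ) (x y : A) (γ : G),
      act a (x - y) γ = act a x γ - act a y γ := by
    intro a x y γ
    have h := h_add a (x - y) y γ
    rw [sub_add_cancel] at h
    exact eq_sub_of_add_eq h.symm
  -- explicit formula for r
  have hR : ∀ γ : G, r γ = I - act ((2 - k₁) + (2 - k₂)) I γ
      + r₁ γ * r₂ γ - r₂ γ * I₁ := by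
    intro γ
    linear_combination hI γ
  -- act of a product with swapped weights
  have hmul' : ∀ (x y : A) (γ : G),
      act ((2 - k₁) + (2 - k₂)) (x * y) γ
        = act (2 - k₂) x γ * act (2 - k₁) y γ := by
    intro x y γ
    rw [show (2 - k₁) + (2 - k₂) = (2 - k₂) + (2 - k₁) by ring, h_mul]
  have hS : act (2 - k₁) I₁ γ₂ = I₁ - r₁ γ₂ := by
    linear_combination -(hI₁ γ₂)
  -- expand act w (r γ₁) γ₂
  have h6 : act ((2 - k₁) + (2 - k₂)) (r γ₁) γ₂
      = act ((2 - k₁) + (2 - k₂)) I γ₂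
        - act ((2 - k₁) + (2 - k₂)) I (γ₁ * γ₂)
        + act (2 - k₁) (r₁ γ₁) γ₂ * act (2 - k₂) (r₂ γ₁) γ₂
        - act (2 - k₂) (r₂ γ₁) γ₂ * (I₁ - r₁ γ₂) := by
    rw [hR γ₁, hsub, h_add, hsub, h_comp, h_mul, hmul', hS]
  rw [hR (γ₁ * γ₂), hR γ₂, h6, hr₁ γ₁ γ₂, hr₂ γ₁ γ₂]
  ring
end

section
/- For m₁,…,m_r ∈ ℕ, n_r ≤ m_r, and the chain of conditions n_{j} ≤ m_j + m_{j+1} + ⋯ + m_r − n_{j+1} − ⋯ − n_r for all j, define A^{[m₁,…,m_r]}_{n₁,…,n_r} := C(m_r, n_r) · C(m_r + m_{r−1} − n_r, n_{r−1}) ⋯ C(m_r + ⋯ + m₂ − n_r − ⋯ − n₂, n₁). Prove the polynomial identity: for indeterminates w₁,…,w_r, τ, ∏_{j=1}^r (w_j − τ)^{m_j} = Σ over tuples (n₁,…,n_r) with n₂,…,n_r ≥ 0 and n₁ = m₁+⋯+m_r − n₂ − ⋯ − n_r − n, summed over 0 ≤ n ≤ m₁+⋯+m_r, of A^{[m₁,…,m_r]}_{n₁,…,n_r}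 · (w₁ − a)^{n₁} (w₂ − w₁)^{n₂} ⋯ (w_r − w_{r−1})^{n_r} (a − τ)^n, for any indeterminate a. -/
open Finset

/-- The coefficient `A^{[m₁,…,m_r]}_{n₁,…,n_r} = ∏_j C(m_j + m_{j+1} + ⋯ + m_r − n_{j+1}
− ⋯ − n_r, n_j)` (the binomial coefficient being declared `0` whenever the chain
condition `n_{j+1} + ⋯ + n_r ≤ m_j + ⋯ + m_r` fails). -/
def Acoef (r : ℕ) (m ν : Fin r → ℕ) : ℕ :=
  ∏ j : Fin r,
    if (∑ l ∈ Finset.Ioi j, ν l) ≤ (∑ l ∈ Finset.Ici j, m l) then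
      Nat.choose ((∑ l ∈ Finset.Ici j, m l) - (∑ l ∈ Finset.Ioi j, ν l)) (ν j)
    else 0

lemma sum_piFinset_cons' {n : ℕ} {α : Fin (n+1) → Type*} [∀ i, DecidableEq (α i)]
    {M : Type*} [AddCommMonoid M] (S : ∀ i, Finset (α i)) (g : (∀ i, α i) → M) :
    ∑ ν ∈ Fintype.piFinset S, g ν
      = ∑ x ∈ S 0, ∑ ν ∈ Fintype.piFinset (fun i : Fin n => S i.succ), g (Fin.cons x ν) := by
  have h := Finset.filter_piFinset_eq_map_consEquiv S (fun _ => True)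
  simp only [Finset.filter_true] at h
  rw [h, Finset.sum_map, Finset.sum_product]
  rfl

lemma sum_Ici_eq (n : ℕ) (f : Fin n → ℕ) (j : Fin n) :
    ∑ l ∈ Finset.Ici j, f l = f j + ∑ l ∈ Finset.Ioi j, f l := by
  rw [Finset.add_sum_Ioi_eq_sum_Ici]

lemma Acoef_succ (r : ℕ) (m ν : Fin (r+1) → ℕ) :
    Acoef (r+1) m ν
      = (if (∑ j : Fin r, ν j.succ) ≤ ∑ j, m j then
          Nat.choose ((∑ j, m j) - (∑ j : Fin r, ν j.succ)) (ν 0) else 0)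
        * Acoef r (fun j => m j.succ) (fun j => ν j.succ) := by
  unfold Acoef
  rw [Fin.prod_univ_succ]
  congr 1
  · rw [Fin.sum_Ioi_zero, sum_Ici_eq, Fin.sum_univ_succ, Fin.sum_Ioi_zero]
  · apply Finset.prod_congr rfl
    intro j _
    rw [Fin.sum_Ioi_succ, sum_Ici_eq, sum_Ici_eq, Fin.sum_Ioi_succ]

lemma Acoef_eq_zero : ∀ {r : ℕ} {m ν : Fin r → ℕ}, (∑ j, m j < ∑ j, ν j) → Acoef r m ν = 0 := by
  intro r
  induction r with
  | zero => intro m ν h; simp at h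
  | succ r ih =>
    intro m ν h
    rw [Acoef_succ]
    rcases le_or_gt (∑ j : Fin r, ν j.succ) (∑ j : Fin r, m j.succ) with h1 | h1
    · rw [Fin.sum_univ_succ, Fin.sum_univ_succ] at h
      have hc : (∑ j, m j) - ∑ j : Fin r, ν j.succ < ν 0 := by
        rw [Fin.sum_univ_succ]; omega
      have hcond : (∑ j : Fin r, ν j.succ) ≤ ∑ j, m j := by
        rw [Fin.sum_univ_succ]; omega
      rw [if_pos hcond, Nat.choose_eq_zero_of_lt hc, zero_mul]
    · rw [ih h1, mul_zero]
lemma key {R : Type*} [CommRing R] (r : ℕ) (m : Fin r → ℕ) (w : Fin r → R) (τ a : R)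
    (N : ℕ) (hN : ∑ j, m j ≤ N) :
    ∏ j : Fin r, (w j - τ) ^ (m j)
      = ∑ ν ∈ Fintype.piFinset (fun _ : Fin r => Finset.range (N + 1)),
          if (∑ j, ν j) ≤ ∑ j, m j then
            (Acoef r m ν : R)
              * (∏ j : Fin r,
                  (w j - (if h : j.val = 0 then a
                          else w ⟨j.val - 1, by have := j.isLt; omega⟩)) ^ (ν j))
              * (a - τ) ^ ((∑ j, m j) - (∑ j, ν j))
          else 0 := by
  induction r generalizing a with
  | zero =>
    simp [Acoef]
  | succ r ih =>
    -- abbreviations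
    have hNt : (∑ j : Fin r, m j.succ) ≤ N := by
      rw [Fin.sum_univ_succ] at hN; omega
    -- rewrite RHS as double sum
    rw [sum_piFinset_cons' (fun _ => Finset.range (N+1)), Finset.sum_comm]
    -- rewrite LHS using IH with base point w 0
    rw [Fin.prod_univ_succ]
    rw [ih (fun j => m j.succ) (fun j => w j.succ) (w 0) hNt, Finset.mul_sum]
    apply Finset.sum_congr rfl
    intro ν' _
    -- notation
    set Mt := ∑ j : Fin r, m j.succ with hMt
    set Vt := ∑ j : Fin r, ν' j with hVt
    -- the previous-point function agrees with w ∘ castSucc, on both sides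
    have hprev : ∀ j : Fin r,
        (if h : j.val = 0 then w 0
         else (fun j : Fin r => w j.succ) ⟨j.val - 1, by have := j.isLt; omega⟩)
          = w j.castSucc := by
      intro j
      by_cases h : j.val = 0
      · rw [dif_pos h]; congr 1; apply Fin.ext; simp [h]
      · rw [dif_neg h]
        show w (Fin.succ ⟨j.val - 1, _⟩) = w j.castSucc
        congr 1
        apply Fin.ext
        simp only [Fin.val_succ, Fin.coe_castSucc]
        omega
    by_cases h1 : Vt ≤ Mt
    · -- main case
      rw [if_pos h1]
      set P : R := ∏ j : Fin r, (w j.succ - w j.castSucc) ^ (ν' j) with hP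
      have hp2 : (∏ j : Fin r,
          ((fun j : Fin r => w j.succ) j -
            (if h : j.val = 0 then w 0
             else (fun j : Fin r => w j.succ) ⟨j.val - 1, by have := j.isLt; omega⟩)) ^ (ν' j))
          = P := by
        apply Finset.prod_congr rfl; intro j _; rw [hprev j]
      rw [hp2]
      -- combine powers of (w 0 - τ)
      have hcomb : (w 0 - τ) ^ (m 0) *
          ((Acoef r (fun j => m j.succ) ν' : R) * P * (w 0 - τ) ^ (Mt - Vt))
          = (Acoef r (fun j => m j.succ) ν' : R) * P * (w 0 - τ) ^ (m 0 + (Mt - Vt)) := by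
        rw [pow_add]; ring
      rw [hcomb]
      set M := m 0 + (Mt - Vt) with hM
      have hMN : M + 1 ≤ N + 1 := by
        have : Mt ≤ N := hNt
        rw [Fin.sum_univ_succ] at hN; omega
      -- binomial expansion
      have hbin : (w 0 - τ) ^ M
          = ∑ n0 ∈ Finset.range (N+1),
              (w 0 - a) ^ n0 * (a - τ) ^ (M - n0) * (Nat.choose M n0 : R) := by
        have hx : w 0 - τ = (w 0 - a) + (a - τ) := by ring
        rw [hx, add_pow]
        apply Finset.sum_subset (Finset.range_subset_range.2 hMN)
        intro n0 _ hn0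
        rw [Finset.mem_range, not_lt] at hn0
        rw [Nat.choose_eq_zero_of_lt (by omega), Nat.cast_zero, mul_zero]
      rw [hbin, Finset.mul_sum]
      apply Finset.sum_congr rfl
      intro n0 _
      -- now compute the goal summand with ν = cons n0 ν'
      have hsum_cons : (∑ j : Fin (r+1), (Fin.cons n0 ν' : Fin (r+1) → ℕ) j) = n0 + Vt := by
        rw [Fin.sum_univ_succ]; simp [hVt]
      have hsum_m : (∑ j : Fin (r+1), m j) = m 0 + Mt := by
        rw [Fin.sum_univ_succ]
      rw [hsum_cons, hsum_m]
      have hAc : Acoef (r+1) m (Fin.cons n0 ν')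
          = (if Vt ≤ m 0 + Mt then Nat.choose (m 0 + Mt - Vt) n0 else 0)
            * Acoef r (fun j => m j.succ) ν' := by
        rw [Acoef_succ]
        simp only [Fin.cons_succ, Fin.cons_zero, hsum_m, ← hVt]
      have hprod_cons : (∏ j : Fin (r+1),
          (w j - (if h : j.val = 0 then a
                  else w ⟨j.val - 1, by have := j.isLt; omega⟩)) ^ ((Fin.cons n0 ν' : Fin (r+1) → ℕ) j))
          = (w 0 - a) ^ n0 * P := by
        rw [Fin.prod_univ_succ, Fin.cons_zero, dif_pos (show ((0 : Fin (r+1)) : ℕ) = 0 from rfl)]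
        congr 1
      rw [hAc, hprod_cons]
      by_cases h2 : n0 + Vt ≤ m 0 + Mt
      · rw [if_pos h2, if_pos (by omega)]
        have hMeq : m 0 + Mt - Vt = M := by omega
        have hEeq : m 0 + Mt - (n0 + Vt) = M - n0 := by omega
        rw [hMeq, hEeq]
        push_cast
        ring
      · rw [if_neg h2]
        have : M < n0 := by omega
        rw [Nat.choose_eq_zero_of_lt this, Nat.cast_zero]
        ring
    · -- tail chain fails: both sides zero
      rw [if_neg h1, mul_zero]
      symm
      apply Finset.sum_eq_zero
      intro n0 _
      have hz : Acoef (r+1) m (Fin.cons n0 ν') = 0 := by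
        rw [Acoef_succ]
        simp only [Fin.cons_succ]
        rw [Acoef_eq_zero (by omega : (∑ j : Fin r, m j.succ) < ∑ j : Fin r, ν' j), mul_zero]
      rw [hz]
      simp

/-- the polynomial identity
`∏_{j=1}^r (w_j − τ)^{m_j} = Σ A^{[m]}_{n} (w₁−a)^{n₁}(w₂−w₁)^{n₂}⋯(w_r−w_{r−1})^{n_r}(a−τ)^n`,
the sum ranging over all tuples `(n₁,…,n_r)` of nonnegative integers with
`n₁ + ⋯ + n_r + n = m₁ + ⋯ + m_r` (equivalently `n₁ = m₁+⋯+m_r − n₂−⋯−n_r − n` with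
`0 ≤ n ≤ m₁+⋯+m_r`); tuples violating the chain conditions contribute `0`. -/
theorem stmt6 {R : Type*} [CommRing R] (r : ℕ) (m : Fin r → ℕ)
    (w : Fin r → R) (τ a : R) :
    ∏ j : Fin r, (w j - τ) ^ (m j)
      = ∑ ν ∈ Fintype.piFinset (fun _ : Fin r => Finset.range ((∑ j, m j) + 1)),
          if (∑ j, ν j) ≤ ∑ j, m j then
            (Acoef r m ν : R)
              * (∏ j : Fin r,
                  (w j - (if h : j.val = 0 then a
                          else w ⟨j.val - 1, by have := j.isLt; omega⟩)) ^ (ν j))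
              * (a - τ) ^ ((∑ j, m j) - (∑ j, ν j))
          else 0 :=
  key r m w τ a (∑ j, m j) le_rfl
end

section
/- Let f₁(τ) = Σ_{n≥1} c₁(n) e^{2πinτ} and f₂(τ) = Σ_{n≥1} c₂(n) e^{2πinτ} with polynomially bounded coefficients. For Re(s₁), Re(s₂) sufficiently large and α ∈ ℝ, define Λ_{f₁,f₂}(α; s₁,s₂) := ∫_α^{i∞} f₁(w₁)(w₁−α)^{s₁−1} ∫_{w₁}^{i∞} f₂(w₂)(w₂−w₁)^{s₂−1} dw₂ dw₁, with both integrals along vertical lines. Then Λ_{f₁,f₂}(α; s₁,s₂) = Γ(s₁)Γ(s₂)/(−2πi)^{s₁+s₂} · Σ_{n₁,n₂≥1} c₁(n₁)c₂(n₂) e^{2πi(n₁+n₂)α} (n₁+n₂)^{−s₁} n₂^{−s₂}. -/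
open Complex MeasureTheory

noncomputable section

open Real Set


namespace Stmt9Aux

/-- log of t*I for positive t -/
lemma log_tI {t : ℝ} (ht : 0 < t) : Complex.log ((t : ℂ) * I) = (Real.log t : ℂ) + (π/2) * I := by
  rw [Complex.log_ofReal_mul ht I_ne_zero, Complex.log_I]

/-- split (t*I)^w -/
lemma cpow_tI {t : ℝ} (ht : 0 < t) (w : ℂ) : ((t : ℂ) * I) ^ w = (t : ℂ) ^ w * I ^ w := by
  rw [Complex.cpow_def_of_ne_zero (mul_ne_zero (ofReal_ne_zero.mpr ht.ne') I_ne_zero),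
    Complex.cpow_def_of_ne_zero (ofReal_ne_zero.mpr ht.ne'),
    Complex.cpow_def_of_ne_zero I_ne_zero, log_tI ht, Complex.log_I,
    ← Complex.exp_add, ← Complex.ofReal_log ht.le]
  ring_nf

lemma log_neg_two_pi_I : Complex.log (-2 * (π : ℂ) * I) = (Real.log (2*π) : ℂ) - (π/2) * I := by
  have h : (-2 : ℂ) * (π : ℂ) * I = ((2 * π : ℝ) : ℂ) * (-I) := by push_cast; ring
  rw [h, Complex.log_ofReal_mul (by positivity) (by simp [I_ne_zero]), Complex.log_neg_I]
  ring

/-- The key branch identity. -/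
lemma keyC {m : ℝ} (hm : 0 < m) (s : ℂ) :
    I ^ s * (((2 * π * m : ℝ)) : ℂ) ^ (-s) = (-2 * (π : ℂ) * I) ^ (-s) * ((m : ℝ) : ℂ) ^ (-s) := by
  have h2pi : (0:ℝ) < 2 * π * m := by positivity
  rw [Complex.cpow_def_of_ne_zero I_ne_zero,
    Complex.cpow_def_of_ne_zero (ofReal_ne_zero.mpr h2pi.ne'),
    Complex.cpow_def_of_ne_zero (by simp [Complex.I_ne_zero, Real.pi_ne_zero] : (-2 : ℂ) * (π:ℂ) * I ≠ 0),
    Complex.cpow_def_of_ne_zero (ofReal_ne_zero.mpr hm.ne'),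
    Complex.log_I, log_neg_two_pi_I, ← Complex.ofReal_log h2pi.le, ← Complex.ofReal_log hm.le,
    ← Complex.exp_add, ← Complex.exp_add]
  congr 1
  have : Real.log (2 * π * m) = Real.log (2*π) + Real.log m := by
    rw [Real.log_mul (by positivity) hm.ne']
  rw [this]
  push_cast
  ring

end Stmt9Aux

namespace Stmt9Aux2
open Stmt9Aux

/-- master coefficient bound -/
lemma master_bound {c : ℕ → ℂ} (hc0 : c 0 = 0)
    (hgrow : ∃ C C' : ℝ, ∀ n : ℕ, ‖c n‖ ≤ C' * (n : ℝ) ^ C) :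
    ∃ (k : ℕ) (B : ℝ), 1 ≤ k ∧ 0 ≤ B ∧ ∀ n : ℕ, ‖c n‖ ≤ B * (n : ℝ) ^ (k : ℕ) := by
  obtain ⟨C, C', hC⟩ := hgrow
  refine ⟨⌈C⌉₊ + 1, max C' 0, by omega, le_max_right _ _, fun n => ?_⟩
  rcases Nat.eq_zero_or_pos n with rfl | hn
  · simp [hc0]
  · have h1 : (1:ℝ) ≤ (n:ℝ) := by exact_mod_cast hn
    calc ‖c n‖ ≤ C' * (n : ℝ) ^ C := hC n
    _ ≤ max C' 0 * (n : ℝ) ^ C :=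
        mul_le_mul_of_nonneg_right (le_max_left _ _) (Real.rpow_nonneg (by positivity) _)
    _ ≤ max C' 0 * (n : ℝ) ^ ((⌈C⌉₊ + 1 : ℕ) : ℝ) := by
        refine mul_le_mul_of_nonneg_left ?_ (le_max_right _ _)
        refine Real.rpow_le_rpow_of_exponent_le h1 ?_
        push_cast
        have := Nat.le_ceil C
        linarith
    _ = max C' 0 * (n : ℝ) ^ ((⌈C⌉₊ + 1 : ℕ)) := by
        rw [Real.rpow_natCast]

/-- summability with exponential decay -/
lemma summ_exp {c : ℕ → ℂ} {k : ℕ} {B : ℝ}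
    (hb : ∀ n : ℕ, ‖c n‖ ≤ B * (n : ℝ) ^ k) {u : ℝ} (hu : 0 < u) :
    Summable (fun n : ℕ => ‖c n‖ * Real.exp (-(2 * π * n * u))) := by
  have hr : ‖Real.exp (-(2*π*u))‖ < 1 := by
    rw [Real.norm_eq_abs, abs_of_pos (Real.exp_pos _)]
    have : (0:ℝ) < 2*π*u := by positivity
    exact Real.exp_lt_one_iff.mpr (by linarith)
  refine Summable.of_nonneg_of_le (fun n => by positivity) (fun n => ?_)
    ((summable_pow_mul_geometric_of_norm_lt_one k hr).mul_left B)
  have h1 : Real.exp (-(2*π*n*u)) = Real.exp (-(2*π*u)) ^ n := by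
    rw [← Real.exp_nat_mul]
    congr 1
    ring
  rw [h1, ← mul_assoc]
  exact mul_le_mul_of_nonneg_right (hb n) (pow_nonneg (Real.exp_pos _).le n)

/-- polynomial-decay summability -/
lemma summ_rpow {c : ℕ → ℂ} {k : ℕ} {B : ℝ} (hB : 0 ≤ B)
    (hb : ∀ n : ℕ, ‖c n‖ ≤ B * (n : ℝ) ^ k) {σ : ℝ} (hσ : (k : ℝ) + 1 < σ) :
    Summable (fun n : ℕ => ‖c n‖ * (n : ℝ) ^ (-σ)) := by
  have hσpos : (0:ℝ) < σ := by
    have : (0:ℝ) ≤ (k:ℝ) := Nat.cast_nonneg k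
    linarith
  have hσ0 : σ ≠ 0 := hσpos.ne'
  refine Summable.of_nonneg_of_le (fun n => by positivity) (fun n => ?_)
    (((Real.summable_nat_rpow.mpr (by linarith : (k:ℝ) - σ < -1))).mul_left B)
  rcases Nat.eq_zero_or_pos n with rfl | hn
  · rw [Nat.cast_zero, Real.zero_rpow (neg_ne_zero.mpr hσ0)]
    simp only [mul_zero]
    positivity
  · have hn0 : (0:ℝ) < (n:ℝ) := by exact_mod_cast hn
    have : (n:ℝ) ^ (k:ℕ) * (n:ℝ) ^ (-σ) = (n:ℝ) ^ ((k:ℝ) - σ) := by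
      rw [← Real.rpow_natCast (n:ℝ) k, ← Real.rpow_add hn0]
      ring_nf
    calc ‖c n‖ * (n:ℝ) ^ (-σ) ≤ (B * (n:ℝ) ^ (k:ℕ)) * (n:ℝ) ^ (-σ) :=
          mul_le_mul_of_nonneg_right (hb n) (Real.rpow_nonneg hn0.le _)
    _ = B * (n:ℝ) ^ ((k:ℝ) - σ) := by rw [mul_assoc, this]

/-- antitone rpow with negative exponent -/
lemma rpow_neg_anti {x y σ : ℝ} (hx : 0 < x) (hxy : x ≤ y) (hσ : 0 ≤ σ) :
    y ^ (-σ) ≤ x ^ (-σ) := by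
  rw [Real.rpow_neg (hx.le.trans hxy), Real.rpow_neg hx.le]
  exact inv_anti₀ (Real.rpow_pos_of_pos hx σ) (Real.rpow_le_rpow hx.le hxy hσ)

/-- exponent splitting for the character -/
lemma exp_split (α : ℝ) (n : ℕ) (x y : ℝ) :
    Complex.exp (2 * (π:ℂ) * I * (n:ℂ) * ((α:ℂ) + (x:ℂ)*I + (y:ℂ)*I)) =
      Complex.exp (2 * (π:ℂ) * I * (n:ℂ) * (α:ℂ)) *
        (Real.exp (-(2*π*n*x)) : ℝ) * (Real.exp (-(2*π*n*y)) : ℝ) := by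
  rw [Complex.ofReal_exp, Complex.ofReal_exp, ← Complex.exp_add, ← Complex.exp_add]
  congr 1
  push_cast
  linear_combination (2*(π:ℂ)*(n:ℂ)*(x:ℂ) + 2*(π:ℂ)*(n:ℂ)*(y:ℂ)) * Complex.I_sq

lemma exp_split1 (α : ℝ) (n : ℕ) (x : ℝ) :
    Complex.exp (2 * (π:ℂ) * I * (n:ℂ) * ((α:ℂ) + (x:ℂ)*I)) =
      Complex.exp (2 * (π:ℂ) * I * (n:ℂ) * (α:ℂ)) * (Real.exp (-(2*π*n*x)) : ℝ) := by
  rw [Complex.ofReal_exp, ← Complex.exp_add]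
  congr 1
  push_cast
  linear_combination (2*(π:ℂ)*(n:ℂ)*(x:ℂ)) * Complex.I_sq

lemma norm_char (α : ℝ) (n : ℕ) : ‖Complex.exp (2 * (π:ℂ) * I * (n:ℂ) * (α:ℂ))‖ = 1 := by
  have h : 2 * (π:ℂ) * I * (n:ℂ) * (α:ℂ) = ((2*π*n*α : ℝ) : ℂ) * I := by push_cast; ring
  rw [h, Complex.norm_exp_ofReal_mul_I]

/-- the additive character -/
def e (α : ℝ) (n : ℕ) : ℂ := Complex.exp (2 * (π:ℂ) * I * (n:ℂ) * (α:ℂ))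

/-- inner coefficients -/
def a2 (c₂ : ℕ → ℂ) (α : ℝ) (n : ℕ) (x : ℝ) : ℂ :=
  c₂ n * e α n * (Real.exp (-(2*π*n*x)) : ℝ)

lemma norm_a2 (c₂ : ℕ → ℂ) (α : ℝ) (n : ℕ) (x : ℝ) :
    ‖a2 c₂ α n x‖ = ‖c₂ n‖ * Real.exp (-(2*π*n*x)) := by
  simp only [a2, e]
  rw [norm_mul, norm_mul, norm_char, mul_one, Complex.norm_real, Real.norm_eq_abs,
    abs_of_pos (Real.exp_pos _)]

/-- summability of the inner coefficient sequence -/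
lemma summ_a2 {c₂ : ℕ → ℂ} {k : ℕ} {B : ℝ}
    (hb : ∀ n : ℕ, ‖c₂ n‖ ≤ B * (n : ℝ) ^ k) {x : ℝ} (hx : 0 < x) :
    Summable (fun n : ℕ => ‖a2 c₂ α n x‖) := by
  simp only [norm_a2]
  exact summ_exp hb hx

/-- The evaluation of the inner Mellin transform. -/
lemma inner_hasSum {c₂ : ℕ → ℂ} (hc₂0 : c₂ 0 = 0) {k : ℕ} {B : ℝ}
    (hb : ∀ n : ℕ, ‖c₂ n‖ ≤ B * (n : ℝ) ^ k) (α : ℝ) {t₁ : ℝ} (ht₁ : 0 < t₁)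
    {s₂ : ℂ} (hs₂ : 0 < s₂.re) :
    HasSum (fun n : ℕ => Complex.Gamma s₂ * a2 c₂ α n t₁ / ((2*π*(n:ℝ) : ℝ) : ℂ) ^ s₂)
      (mellin (fun t : ℝ => ∑' n : ℕ, c₂ n * Complex.exp (2 * (π:ℂ) * I * (n:ℂ)
          * ((α:ℂ) + (t₁:ℂ)*I + (t:ℂ)*I))) s₂) := by
  apply hasSum_mellin (p := fun n : ℕ => 2*π*(n:ℝ)) ?_ hs₂ ?_ ?_
  · intro n
    rcases Nat.eq_zero_or_pos n with rfl | hn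
    · exact Or.inl (by simp [a2, hc₂0])
    · refine Or.inr ?_
      show (0:ℝ) < 2 * π * (n:ℝ)
      have : (0:ℝ) < (n:ℝ) := by exact_mod_cast hn
      positivity
  · intro t ht
    rw [mem_Ioi] at ht
    have hsum : Summable (fun n : ℕ => a2 c₂ α n t₁ * (Real.exp (-(2*π*(n:ℝ)) * t) : ℝ)) := by
      apply Summable.of_norm
      refine Summable.of_nonneg_of_le (fun n => norm_nonneg _) (fun n => ?_) (summ_exp hb ht₁)
      rw [norm_mul, norm_a2, Complex.norm_real, Real.norm_eq_abs, abs_of_pos (Real.exp_pos _)]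
      refine mul_le_of_le_one_right (by positivity) (Real.exp_le_one_iff.mpr ?_)
      have : (0:ℝ) ≤ 2*π*(n:ℝ)*t := by positivity
      nlinarith
    have htsum : (∑' n : ℕ, c₂ n * Complex.exp (2 * (π:ℂ) * I * (n:ℂ)
        * ((α:ℂ) + (t₁:ℂ)*I + (t:ℂ)*I)))
        = ∑' n : ℕ, a2 c₂ α n t₁ * (Real.exp (-(2*π*(n:ℝ)) * t) : ℝ) := by
      refine tsum_congr (fun n => ?_)
      rw [exp_split α n t₁ t, a2, e]
      have harg : -(2*π*(n:ℝ)) * t = -(2*π*n*t) := by ring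
      rw [harg]
      ring
    rw [htsum]
    exact hsum.hasSum
  · refine Summable.of_nonneg_of_le (fun n => by positivity) (fun n => ?_) (summ_exp hb ht₁)
    rcases Nat.eq_zero_or_pos n with rfl | hn
    · simp [a2, hc₂0]
    · have h1 : (1:ℝ) ≤ 2*π*(n:ℝ) := by
        have h2 : (1:ℝ) ≤ (n:ℝ) := by exact_mod_cast hn
        nlinarith [Real.pi_gt_three]
      calc ‖a2 c₂ α n t₁‖ / (2*π*(n:ℝ)) ^ s₂.re
          ≤ ‖a2 c₂ α n t₁‖ := by
            apply div_le_self (norm_nonneg _)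
            exact Real.one_le_rpow h1 hs₂.le
      _ = ‖c₂ n‖ * Real.exp (-(2*π*n*t₁)) := norm_a2 ..

/-- outer pair coefficients -/
def bb (c₁ c₂ : ℕ → ℂ) (α : ℝ) (s₂ : ℂ) (q : ℕ × ℕ) : ℂ :=
  c₁ q.1 * e α q.1 *
    (I ^ s₂ * (Complex.Gamma s₂ * (c₂ q.2 * e α q.2) / ((2*π*(q.2:ℝ) : ℝ) : ℂ) ^ s₂))

def PP (q : ℕ × ℕ) : ℝ := 2*π*((q.1:ℝ) + (q.2:ℝ))

def HH (c₁ c₂ : ℕ → ℂ) (α : ℝ) (s₂ : ℂ) (t : ℝ) : ℂ :=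
  ∑' q : ℕ × ℕ, bb c₁ c₂ α s₂ q * (Real.exp (-(PP q) * t) : ℝ)

lemma norm_bb_le {c₁ c₂ : ℕ → ℂ} (hc₂0 : c₂ 0 = 0) (α : ℝ) {s₂ : ℂ} (hs₂ : 0 < s₂.re)
    (q : ℕ × ℕ) :
    ‖bb c₁ c₂ α s₂ q‖ ≤ ‖c₁ q.1‖ * ((‖I ^ s₂‖ * ‖Complex.Gamma s₂‖) * ‖c₂ q.2‖) := by
  rcases Nat.eq_zero_or_pos q.2 with h2 | h2
  · simp [bb, h2, hc₂0]
  · have hq2 : (0:ℝ) < (q.2:ℝ) := by exact_mod_cast h2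
    have h1 : (1:ℝ) ≤ 2*π*(q.2:ℝ) := by
      have h2' : (1:ℝ) ≤ (q.2:ℝ) := by exact_mod_cast h2
      nlinarith [Real.pi_gt_three]
    have hden : (1:ℝ) ≤ ‖((2*π*(q.2:ℝ) : ℝ) : ℂ) ^ s₂‖ := by
      rw [Complex.norm_cpow_eq_rpow_re_of_pos (by linarith)]
      exact Real.one_le_rpow h1 hs₂.le
    have hnorm : ‖bb c₁ c₂ α s₂ q‖ = (‖c₁ q.1‖ * ((‖I ^ s₂‖ * ‖Complex.Gamma s₂‖) * ‖c₂ q.2‖))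
        / ‖(((2*π*(q.2:ℝ)) : ℝ) : ℂ) ^ s₂‖ := by
      simp only [bb, e, norm_mul, norm_div, norm_char, mul_one]
      ring
    rw [hnorm]
    exact div_le_self (by positivity) hden

set_option maxHeartbeats 1000000 in
/-- The evaluation of the outer Mellin transform. -/
lemma outer_hasSum {c₁ c₂ : ℕ → ℂ} (hc₁0 : c₁ 0 = 0) (hc₂0 : c₂ 0 = 0)
    {k₁ k₂ : ℕ} {B₁ B₂ : ℝ}
    (hb₁ : ∀ n : ℕ, ‖c₁ n‖ ≤ B₁ * (n : ℝ) ^ k₁) (hb₂ : ∀ n : ℕ, ‖c₂ n‖ ≤ B₂ * (n : ℝ) ^ k₂)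
    (hB₁ : 0 ≤ B₁) (hB₂ : 0 ≤ B₂) (α : ℝ) {s₁ s₂ : ℂ}
    (hσ₁ : (k₁ : ℝ) + 1 < s₁.re) (hσ₂ : (k₂ : ℝ) + 1 < s₂.re) (hs₂ : 0 < s₂.re) :
    HasSum (fun q : ℕ × ℕ => Complex.Gamma s₁ * bb c₁ c₂ α s₂ q / ((PP q : ℝ) : ℂ) ^ s₁)
      (mellin (HH c₁ c₂ α s₂) s₁) := by
  have hs₁ : 0 < s₁.re := by
    have : (0:ℝ) ≤ (k₁:ℝ) := Nat.cast_nonneg _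
    linarith
  apply hasSum_mellin (p := PP) ?_ hs₁ ?_ ?_
  · intro q
    rcases Nat.eq_zero_or_pos (q.1 + q.2) with h | h
    · have h1 : q.1 = 0 := by omega
      exact Or.inl (by simp [bb, h1, hc₁0])
    · refine Or.inr ?_
      have : (0:ℝ) < (q.1:ℝ) + (q.2:ℝ) := by
        have := h
        push_cast [← Nat.cast_add]
        exact_mod_cast h
      show (0:ℝ) < 2*π*((q.1:ℝ) + (q.2:ℝ))
      positivity
  · intro t ht
    rw [mem_Ioi] at ht
    have hsum : Summable (fun q : ℕ × ℕ => bb c₁ c₂ α s₂ q * (Real.exp (-(PP q) * t) : ℝ)) := by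
      apply Summable.of_norm
      have hmul : Summable (fun q : ℕ × ℕ =>
          (‖c₁ q.1‖ * Real.exp (-(2*π*q.1*t))) *
            ((‖I ^ s₂‖ * ‖Complex.Gamma s₂‖) * (‖c₂ q.2‖ * Real.exp (-(2*π*q.2*t))))) :=
        Summable.mul_of_nonneg (summ_exp hb₁ ht) ((summ_exp hb₂ ht).mul_left _)
          (fun n => mul_nonneg (norm_nonneg _) (Real.exp_pos _).le)
          (fun n => mul_nonneg (mul_nonneg (norm_nonneg _) (norm_nonneg _))
            (mul_nonneg (norm_nonneg _) (Real.exp_pos _).le))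
      refine Summable.of_nonneg_of_le (fun q => norm_nonneg _) (fun q => ?_) hmul
      rw [norm_mul, Complex.norm_real, Real.norm_eq_abs, abs_of_pos (Real.exp_pos _)]
      have hexp : Real.exp (-(PP q) * t) = Real.exp (-(2*π*q.1*t)) * Real.exp (-(2*π*q.2*t)) := by
        rw [← Real.exp_add]
        congr 1
        simp only [PP]
        ring
      rw [hexp]
      calc ‖bb c₁ c₂ α s₂ q‖ * (Real.exp (-(2*π*q.1*t)) * Real.exp (-(2*π*q.2*t)))
          ≤ (‖c₁ q.1‖ * ((‖I ^ s₂‖ * ‖Complex.Gamma s₂‖) * ‖c₂ q.2‖)) *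
            (Real.exp (-(2*π*q.1*t)) * Real.exp (-(2*π*q.2*t))) :=
            mul_le_mul_of_nonneg_right (norm_bb_le hc₂0 α hs₂ q) (by positivity)
      _ = (‖c₁ q.1‖ * Real.exp (-(2*π*q.1*t))) *
            ((‖I ^ s₂‖ * ‖Complex.Gamma s₂‖) * (‖c₂ q.2‖ * Real.exp (-(2*π*q.2*t)))) := by ring
    exact hsum.hasSum
  · -- summability of ‖bb q‖ / (PP q) ^ s₁.re
    have hmul : Summable (fun q : ℕ × ℕ =>
        (‖c₁ q.1‖ * (q.1:ℝ) ^ (-s₁.re)) *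
          ((‖I ^ s₂‖ * ‖Complex.Gamma s₂‖) * (‖c₂ q.2‖ * (q.2:ℝ) ^ (-s₂.re)))) :=
      Summable.mul_of_nonneg (summ_rpow hB₁ hb₁ hσ₁) ((summ_rpow hB₂ hb₂ hσ₂).mul_left _)
        (fun n => mul_nonneg (norm_nonneg _) (Real.rpow_nonneg (Nat.cast_nonneg _) _))
        (fun n => mul_nonneg (mul_nonneg (norm_nonneg _) (norm_nonneg _))
          (mul_nonneg (norm_nonneg _) (Real.rpow_nonneg (Nat.cast_nonneg _) _)))
    refine Summable.of_nonneg_of_le (fun q => div_nonneg (norm_nonneg _)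
      (Real.rpow_nonneg (by simp only [PP]; positivity) _)) (fun q => ?_) hmul
    rcases Nat.eq_zero_or_pos q.1 with h1 | h1
    · have : bb c₁ c₂ α s₂ q = 0 := by simp [bb, h1, hc₁0]
      rw [this, norm_zero, zero_div]
      positivity
    rcases Nat.eq_zero_or_pos q.2 with h2 | h2
    · have : bb c₁ c₂ α s₂ q = 0 := by simp [bb, h2, hc₂0]
      rw [this, norm_zero, zero_div]
      positivity
    have hq1 : (0:ℝ) < (q.1:ℝ) := by exact_mod_cast h1
    have hq2 : (0:ℝ) < (q.2:ℝ) := by exact_mod_cast h2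
    have hPP : (0:ℝ) < PP q := by
      simp only [PP]; positivity
    -- ‖bb q‖ ≤ ‖c₁‖ * (G * (‖c₂‖ * q2 ^ (-σ₂)))
    have hbb : ‖bb c₁ c₂ α s₂ q‖ ≤
        ‖c₁ q.1‖ * ((‖I ^ s₂‖ * ‖Complex.Gamma s₂‖) * (‖c₂ q.2‖ * (q.2:ℝ) ^ (-s₂.re))) := by
      have h1' : (q.2:ℝ) ≤ 2*π*(q.2:ℝ) := by nlinarith [Real.pi_gt_three]
      have hanti : (2*π*(q.2:ℝ)) ^ (-s₂.re) ≤ (q.2:ℝ) ^ (-s₂.re) :=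
        rpow_neg_anti hq2 h1' hs₂.le
      have hnorm : ‖bb c₁ c₂ α s₂ q‖ = (‖c₁ q.1‖ * ((‖I ^ s₂‖ * ‖Complex.Gamma s₂‖) * ‖c₂ q.2‖))
          / ‖(((2*π*(q.2:ℝ)) : ℝ) : ℂ) ^ s₂‖ := by
        simp only [bb, e, norm_mul, norm_div, norm_char, mul_one]
        ring
      rw [hnorm,
        Complex.norm_cpow_eq_rpow_re_of_pos (by positivity), div_eq_mul_inv,
        ← Real.rpow_neg (by positivity)]
      calc (‖c₁ q.1‖ * ((‖I ^ s₂‖ * ‖Complex.Gamma s₂‖) * ‖c₂ q.2‖)) * (2*π*(q.2:ℝ)) ^ (-s₂.re)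
          ≤ (‖c₁ q.1‖ * ((‖I ^ s₂‖ * ‖Complex.Gamma s₂‖) * ‖c₂ q.2‖)) * (q.2:ℝ) ^ (-s₂.re) :=
            mul_le_mul_of_nonneg_left hanti (by positivity)
      _ = ‖c₁ q.1‖ * ((‖I ^ s₂‖ * ‖Complex.Gamma s₂‖) * (‖c₂ q.2‖ * (q.2:ℝ) ^ (-s₂.re))) := by
            ring
    have hPanti : (PP q) ^ (-s₁.re) ≤ (q.1:ℝ) ^ (-s₁.re) := by
      refine rpow_neg_anti hq1 ?_ hs₁.le
      simp only [PP]
      nlinarith [Real.pi_gt_three, hq2.le]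
    calc ‖bb c₁ c₂ α s₂ q‖ / (PP q) ^ s₁.re
        = ‖bb c₁ c₂ α s₂ q‖ * (PP q) ^ (-s₁.re) := by
          rw [div_eq_mul_inv, ← Real.rpow_neg hPP.le]
    _ ≤ (‖c₁ q.1‖ * ((‖I ^ s₂‖ * ‖Complex.Gamma s₂‖) * (‖c₂ q.2‖ * (q.2:ℝ) ^ (-s₂.re)))) *
          (q.1:ℝ) ^ (-s₁.re) :=
        mul_le_mul hbb hPanti (Real.rpow_nonneg hPP.le _) (by positivity)
    _ = (‖c₁ q.1‖ * (q.1:ℝ) ^ (-s₁.re)) *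
          ((‖I ^ s₂‖ * ‖Complex.Gamma s₂‖) * (‖c₂ q.2‖ * (q.2:ℝ) ^ (-s₂.re))) := by ring

set_option maxHeartbeats 1000000 in
/-- pointwise evaluation of the full integrand on `Ioi 0` -/
lemma pointwise_eq {c₁ c₂ : ℕ → ℂ} (hc₂0 : c₂ 0 = 0)
    {k₁ k₂ : ℕ} {B₁ B₂ : ℝ}
    (hb₁ : ∀ n : ℕ, ‖c₁ n‖ ≤ B₁ * (n : ℝ) ^ k₁) (hb₂ : ∀ n : ℕ, ‖c₂ n‖ ≤ B₂ * (n : ℝ) ^ k₂)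
    (α : ℝ) {t₁ : ℝ} (ht₁ : 0 < t₁) {s₁ s₂ : ℂ} (hs₂ : 0 < s₂.re) :
    (∑' n : ℕ, c₁ n * Complex.exp (2 * (π:ℂ) * I * (n:ℂ) * ((α:ℂ) + (t₁:ℂ) * I)))
      * ((t₁:ℂ) * I) ^ (s₁ - 1)
      * (I * ∫ t₂ in Ioi (0:ℝ),
          (∑' n : ℕ, c₂ n * Complex.exp (2 * (π:ℂ) * I * (n:ℂ)
              * ((α:ℂ) + (t₁:ℂ) * I + (t₂:ℂ) * I)))
            * ((t₂:ℂ) * I) ^ (s₂ - 1))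
    = ((t₁:ℂ) ^ (s₁ - 1) * HH c₁ c₂ α s₂ t₁) * I ^ (s₁ - 1) := by
  have hinner := inner_hasSum hc₂0 hb₂ α ht₁ hs₂
  have hIntEq : (∫ t₂ in Ioi (0:ℝ),
      (∑' n : ℕ, c₂ n * Complex.exp (2 * (π:ℂ) * I * (n:ℂ)
          * ((α:ℂ) + (t₁:ℂ) * I + (t₂:ℂ) * I)))
        * ((t₂:ℂ) * I) ^ (s₂ - 1))
      = mellin (fun t : ℝ => ∑' n : ℕ, c₂ n * Complex.exp (2 * (π:ℂ) * I * (n:ℂ)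
          * ((α:ℂ) + (t₁:ℂ)*I + (t:ℂ)*I))) s₂ * I ^ (s₂ - 1) := by
    rw [mellin, ← integral_mul_const]
    refine setIntegral_congr_fun measurableSet_Ioi (fun t ht => ?_)
    rw [cpow_tI (mem_Ioi.mp ht)]
    simp only [smul_eq_mul]
    ring
  rw [hIntEq]
  have hIs2 : ∀ M : ℂ, I * (M * I ^ (s₂ - 1)) = I ^ s₂ * M := by
    intro M
    conv_rhs => rw [show s₂ = (s₂ - 1) + 1 by ring]
    rw [Complex.cpow_add _ _ I_ne_zero, Complex.cpow_one]
    ring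
  rw [hIs2, ← hinner.tsum_eq, ← tsum_mul_left]
  have h1 : (∑' n : ℕ, c₁ n * Complex.exp (2 * (π:ℂ) * I * (n:ℂ) * ((α:ℂ) + (t₁:ℂ) * I)))
      = ∑' n : ℕ, a2 c₁ α n t₁ := by
    refine tsum_congr (fun n => ?_)
    rw [exp_split1 α n t₁, a2, e]
    ring
  rw [h1, cpow_tI ht₁]
  have hu : Summable (fun n : ℕ => ‖a2 c₁ α n t₁‖) := summ_a2 (α := α) hb₁ ht₁
  have hv : Summable (fun n : ℕ =>
      ‖I ^ s₂ * (Complex.Gamma s₂ * a2 c₂ α n t₁ / ((2*π*(n:ℝ) : ℝ) : ℂ) ^ s₂)‖) := by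
    refine Summable.of_nonneg_of_le (fun n => norm_nonneg _) (fun n => ?_)
      (((summ_a2 (α := α) hb₂ ht₁).mul_left (‖I ^ s₂‖ * ‖Complex.Gamma s₂‖)))
    rcases Nat.eq_zero_or_pos n with rfl | hn
    · simp [a2, hc₂0]
    · have h2' : (1:ℝ) ≤ (n:ℝ) := by exact_mod_cast hn
      have h1' : (1:ℝ) ≤ 2*π*(n:ℝ) := by nlinarith [Real.pi_gt_three]
      have hden : (1:ℝ) ≤ ‖((2*π*(n:ℝ) : ℝ) : ℂ) ^ s₂‖ := by
        rw [Complex.norm_cpow_eq_rpow_re_of_pos (by linarith)]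
        exact Real.one_le_rpow h1' hs₂.le
      rw [norm_mul, norm_div, norm_mul]
      calc ‖I ^ s₂‖ * (‖Complex.Gamma s₂‖ * ‖a2 c₂ α n t₁‖ / ‖((2*π*(n:ℝ) : ℝ) : ℂ) ^ s₂‖)
          ≤ ‖I ^ s₂‖ * (‖Complex.Gamma s₂‖ * ‖a2 c₂ α n t₁‖) := by
            refine mul_le_mul_of_nonneg_left (div_le_self (by positivity) hden) (norm_nonneg _)
      _ = ‖I ^ s₂‖ * ‖Complex.Gamma s₂‖ * ‖a2 c₂ α n t₁‖ := by ring
  rw [mul_right_comm, tsum_mul_tsum_of_summable_norm hu hv]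
  have h2 : (∑' q : ℕ × ℕ, a2 c₁ α q.1 t₁
        * (I ^ s₂ * (Complex.Gamma s₂ * a2 c₂ α q.2 t₁ / ((2*π*(q.2:ℝ) : ℝ) : ℂ) ^ s₂)))
      = HH c₁ c₂ α s₂ t₁ := by
    rw [HH]
    refine tsum_congr (fun q => ?_)
    have hexp : ((Real.exp (-(2*π*q.1*t₁)) : ℝ) : ℂ) * ((Real.exp (-(2*π*q.2*t₁)) : ℝ) : ℂ)
        = ((Real.exp (-(PP q) * t₁) : ℝ) : ℂ) := by
      rw [← Complex.ofReal_mul, ← Real.exp_add]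
      norm_cast
      congr 1
      simp only [PP]
      ring
    simp only [a2, bb]
    rw [← hexp]
    ring
  rw [h2]
  ring

/-- final per-term identity -/
lemma term_eq {c₁ c₂ : ℕ → ℂ} (hc₁0 : c₁ 0 = 0) (hc₂0 : c₂ 0 = 0) (α : ℝ)
    {s₁ s₂ : ℂ} (q : ℕ × ℕ) :
    I ^ s₁ * (Complex.Gamma s₁ * bb c₁ c₂ α s₂ q / ((PP q : ℝ) : ℂ) ^ s₁)
      = Complex.Gamma s₁ * Complex.Gamma s₂ / (-2 * (π : ℂ) * I) ^ (s₁ + s₂)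
          * (c₁ q.1 * c₂ q.2
              * Complex.exp (2 * (π:ℂ) * I * ((q.1 : ℂ) + (q.2 : ℂ)) * (α : ℂ))
              * ((q.1 : ℂ) + (q.2 : ℂ)) ^ (-s₁) * (q.2 : ℂ) ^ (-s₂)) := by
  rcases Nat.eq_zero_or_pos q.1 with h1 | h1
  · simp [bb, h1, hc₁0]
  rcases Nat.eq_zero_or_pos q.2 with h2 | h2
  · simp [bb, h2, hc₂0]
  have hq1 : (0:ℝ) < (q.1:ℝ) := by exact_mod_cast h1
  have hq2 : (0:ℝ) < (q.2:ℝ) := by exact_mod_cast h2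
  have hm : (0:ℝ) < (q.1:ℝ) + (q.2:ℝ) := by linarith
  have hbase : (-2 * (π:ℂ) * I) ≠ 0 := by
    simp [Complex.I_ne_zero, Real.pi_ne_zero]
  have K1 := keyC hm s₁
  have K2 := keyC hq2 s₂
  have hcast : ((((q.1:ℝ) + (q.2:ℝ)) : ℝ) : ℂ) = (q.1:ℂ) + (q.2:ℂ) := by push_cast; ring
  rw [hcast] at K1
  rw [Complex.ofReal_natCast] at K2
  have hesplit : Complex.exp (2 * (π:ℂ) * I * ((q.1:ℂ) + (q.2:ℂ)) * (α:ℂ))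
      = e α q.1 * e α q.2 := by
    simp only [e]
    rw [← Complex.exp_add]
    congr 1
    ring
  rw [hesplit]
  simp only [bb, PP, div_eq_mul_inv, ← Complex.cpow_neg]
  rw [neg_add, Complex.cpow_add _ _ hbase]
  linear_combination
    (Complex.Gamma s₁ * Complex.Gamma s₂ * c₁ q.1 * c₂ q.2 * e α q.1 * e α q.2 *
      (I ^ s₂ * (((2*π*(q.2:ℝ) : ℝ) : ℂ) ^ (-s₂)))) * K1 +
    (Complex.Gamma s₁ * Complex.Gamma s₂ * c₁ q.1 * c₂ q.2 * e α q.1 * e α q.2 *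
      ((-2 * (π:ℂ) * I) ^ (-s₁) * ((q.1:ℂ) + (q.2:ℂ)) ^ (-s₁))) * K2

end Stmt9Aux2


end

open Real Set Stmt9Aux Stmt9Aux2

/-- depth-2 completed multiple `L`-series with additive twist:
for `f₁(τ) = Σ c₁(n) q^n`, `f₂(τ) = Σ c₂(n) q^n` with polynomially bounded coefficients and
`Re(s₁), Re(s₂)` sufficiently large,
`Λ_{f₁,f₂}(α; s₁,s₂) = ∫_α^{i∞} f₁(w₁)(w₁−α)^{s₁−1} ∫_{w₁}^{i∞} f₂(w₂)(w₂−w₁)^{s₂−1} dw₂ dw₁`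
(vertical paths `w₁ = α + it₁`, `w₂ = w₁ + it₂`, principal branches) equals
`Γ(s₁)Γ(s₂)/(−2πi)^{s₁+s₂} Σ_{n₁,n₂≥1} c₁(n₁)c₂(n₂) e^{2πi(n₁+n₂)α} (n₁+n₂)^{−s₁} n₂^{−s₂}`. -/
theorem stmt9 (c₁ c₂ : ℕ → ℂ) (hc₁0 : c₁ 0 = 0) (hc₂0 : c₂ 0 = 0)
    (hgrow₁ : ∃ C C' : ℝ, ∀ n : ℕ, ‖c₁ n‖ ≤ C' * (n : ℝ) ^ C)
    (hgrow₂ : ∃ C C' : ℝ, ∀ n : ℕ, ‖c₂ n‖ ≤ C' * (n : ℝ) ^ C)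
    (α : ℝ) :
    ∃ s₀ : ℝ, ∀ s₁ s₂ : ℂ, s₀ < s₁.re → s₀ < s₂.re →
      Complex.I * ∫ t₁ in Set.Ioi (0 : ℝ),
          ((∑' n : ℕ, c₁ n * Complex.exp (2 * Real.pi * Complex.I * (n : ℂ)
              * ((α : ℂ) + (t₁ : ℂ) * Complex.I)))
            * ((t₁ : ℂ) * Complex.I) ^ (s₁ - 1)
            * (Complex.I * ∫ t₂ in Set.Ioi (0 : ℝ),
                (∑' n : ℕ, c₂ n * Complex.exp (2 * Real.pi * Complex.I * (n : ℂ)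
                    * ((α : ℂ) + (t₁ : ℂ) * Complex.I + (t₂ : ℂ) * Complex.I)))
                  * ((t₂ : ℂ) * Complex.I) ^ (s₂ - 1)))
        = Complex.Gamma s₁ * Complex.Gamma s₂
            / (-2 * (Real.pi : ℂ) * Complex.I) ^ (s₁ + s₂)
            * ∑' p : ℕ × ℕ,
                c₁ p.1 * c₂ p.2
                  * Complex.exp (2 * Real.pi * Complex.I * ((p.1 : ℂ) + (p.2 : ℂ)) * (α : ℂ))
                  * ((p.1 : ℂ) + (p.2 : ℂ)) ^ (-s₁) * (p.2 : ℂ) ^ (-s₂) := by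
  obtain ⟨k₁, B₁, hk₁, hB₁, hb₁⟩ := master_bound hc₁0 hgrow₁
  obtain ⟨k₂, B₂, hk₂, hB₂, hb₂⟩ := master_bound hc₂0 hgrow₂
  refine ⟨(k₁ : ℝ) + (k₂ : ℝ) + 2, fun s₁ s₂ h₁ h₂ => ?_⟩
  have hk₁1 : (1:ℝ) ≤ (k₁:ℝ) := by exact_mod_cast hk₁
  have hk₂1 : (1:ℝ) ≤ (k₂:ℝ) := by exact_mod_cast hk₂
  have hσ₁ : (k₁:ℝ) + 1 < s₁.re := by linarith
  have hσ₂ : (k₂:ℝ) + 1 < s₂.re := by linarith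
  have hs₂ : 0 < s₂.re := by linarith
  have hOuter := outer_hasSum hc₁0 hc₂0 hb₁ hb₂ hB₁ hB₂ α hσ₁ hσ₂ hs₂
  have hint : (∫ t₁ in Set.Ioi (0 : ℝ),
          ((∑' n : ℕ, c₁ n * Complex.exp (2 * Real.pi * Complex.I * (n : ℂ)
              * ((α : ℂ) + (t₁ : ℂ) * Complex.I)))
            * ((t₁ : ℂ) * Complex.I) ^ (s₁ - 1)
            * (Complex.I * ∫ t₂ in Set.Ioi (0 : ℝ),
                (∑' n : ℕ, c₂ n * Complex.exp (2 * Real.pi * Complex.I * (n : ℂ)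
                    * ((α : ℂ) + (t₁ : ℂ) * Complex.I + (t₂ : ℂ) * Complex.I)))
                  * ((t₂ : ℂ) * Complex.I) ^ (s₂ - 1))))
      = mellin (HH c₁ c₂ α s₂) s₁ * I ^ (s₁ - 1) := by
    rw [mellin, ← integral_mul_const]
    refine setIntegral_congr_fun measurableSet_Ioi (fun t₁ ht₁ => ?_)
    rw [pointwise_eq hc₂0 hb₁ hb₂ α (Set.mem_Ioi.mp ht₁) hs₂]
    simp only [smul_eq_mul]
  rw [hint]
  have hIs1 : ∀ M : ℂ, I * (M * I ^ (s₁ - 1)) = I ^ s₁ * M := by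
    intro M
    conv_rhs => rw [show s₁ = (s₁ - 1) + 1 by ring]
    rw [Complex.cpow_add _ _ I_ne_zero, Complex.cpow_one]
    ring
  rw [hIs1, ← hOuter.tsum_eq, ← tsum_mul_left, ← tsum_mul_left]
  exact tsum_congr (fun q => term_eq hc₁0 hc₂0 α q)
end
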